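/- Let n ≥ 1, let ω = exp(2πi/n), and let M be the n × n circulant matrix whose first row is cos(π/n)·(0, 1, −1, 1, …, −1) (i.e., entry (1, k+1) equals cos(π/n)·(−1)^{k−1} for k = 1,…,n−1, and the diagonal entry is 0), with each subsequent row the cyclic shift of the previous one. Then for each j with 1 ≤ j ≤ n−1 and n odd, the eigenvalue of M associated to ω^j equals i·cos(π/n)·tan(πj/n). -/

import Mathlib

open Real Finset Matrix

theorem stmt7 (n : ℕ) (hn1 : 1 ≤ n) (hn : Odd n)
    (M : Matrix (Fin n) (Fin n) ℂ)
    (hM : ∀ i k : Fin n, M i k =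
      if i = k then 0
      else (Real.cos (π / n) : ℂ) * (-1) ^ (((k.val + n - i.val) % n) - 1))
    (j : ℕ) (hj1 : 1 ≤ j) (hj : j ≤ n - 1)
    (v : Fin n → ℂ)
    (hv : ∀ i : Fin n, v i = Complex.exp (2 * π * Complex.I * j * i.val / n)) :
    M.mulVec v = (Complex.I * (Real.cos (π / n) : ℂ) * (Real.tan (π * j / n) : ℂ)) • v := by
  haveI : NeZero n := ⟨by omega⟩
  have hn2 : 2 ≤ n := by
    rcases Nat.lt_or_ge n 2 with h | h
    · interval_cases n <;> omega
    · exact h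
  have hjn : j < n := by omega
  have hnR : (n : ℝ) ≠ 0 := Nat.cast_ne_zero.mpr (by omega)
  have hnC : (n : ℂ) ≠ 0 := Nat.cast_ne_zero.mpr (by omega)
  set θ : ℝ := π * j / n with hθdef
  -- cos θ ≠ 0
  have hcosθ : Real.cos θ ≠ 0 := by
    intro h
    rw [Real.cos_eq_zero_iff] at h
    obtain ⟨k, hk⟩ := h
    have hθpos : 0 < θ := by
      apply div_pos (mul_pos Real.pi_pos _) (by exact_mod_cast by omega)
      exact_mod_cast hj1
    have hθlt : θ < π := by
      rw [hθdef, div_lt_iff₀ (by exact_mod_cast by omega : (0:ℝ) < n)]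
      have : (j : ℝ) < n := by exact_mod_cast hjn
      nlinarith [Real.pi_pos]
    have hk1 : (0:ℝ) < 2*k+1 := by
      by_contra hle
      push_neg at hle
      nlinarith [Real.pi_pos]
    have hk2 : (2*(k:ℝ)+1) < 2 := by
      by_contra hle
      push_neg at hle
      nlinarith [Real.pi_pos]
    have hk0 : k = 0 := by
      have h1 : (0:ℤ) < 2*k+1 := by exact_mod_cast hk1
      have h2 : (2*k+1 : ℤ) < 2 := by exact_mod_cast hk2
      omega
    rw [hk0, hθdef] at hk
    push_cast at hk
    have h2j : (n : ℝ) = 2 * j := by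
      have h' : π * (n : ℝ) = π * (2 * j) := by
        field_simp at hk
        rw [show (n:ℝ) = 2 * j by linarith]
      have := mul_left_cancel₀ Real.pi_ne_zero h'
      linarith
    have : n = 2 * j := by exact_mod_cast h2j
    rw [this] at hn
    simp [Nat.even_iff, Nat.odd_iff, parity_simps] at hn
  set c : ℂ := (Real.cos θ : ℂ) with hcdef
  set s : ℂ := (Real.sin θ : ℂ) with hsdef
  have hc0 : c ≠ 0 := by
    rw [hcdef]
    exact_mod_cast Complex.ofReal_ne_zero.mpr hcosθ
  have hcs : c ^ 2 + s ^ 2 = 1 := by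
    rw [hcdef, hsdef]
    push_cast
    exact_mod_cast congrArg (Complex.ofReal ·) (Real.cos_sq_add_sin_sq θ)
  set w : ℂ := Complex.exp (θ * Complex.I) with hwdef
  have hw0 : w ≠ 0 := Complex.exp_ne_zero _
  have hw : w = c + s * Complex.I := by
    rw [hwdef, Complex.exp_mul_I, hcdef, hsdef, Complex.ofReal_cos, Complex.ofReal_sin]
  set ζ : ℂ := w ^ 2 with hζdef
  have hζw : ζ = (c + s * Complex.I) ^ 2 := by rw [hζdef, hw]
  have hζn : ζ ^ n = 1 := by
    rw [hζdef, ← pow_mul, ← Complex.exp_nat_mul]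
    have : ((2 * n : ℕ) : ℂ) * (θ * Complex.I) = (j : ℤ) * (2 * π * Complex.I) := by
      rw [hθdef]
      push_cast
      field_simp
    rw [this, Complex.exp_int_mul_two_pi_mul_I]
  have hvζ : ∀ i : Fin n, v i = ζ ^ (i : ℕ) := by
    intro i
    rw [hv, hζdef, ← pow_mul, ← Complex.exp_nat_mul]
    congr 1
    rw [hθdef]
    push_cast
    field_simp
  have hζ1 : ζ + 1 = 2 * c * w := by
    rw [hζw, hw]
    linear_combination (-1 : ℂ) * hcs + s ^ 2 * Complex.I_sq
  have hζm1 : ζ ≠ -1 := by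
    intro h
    have h2 : 2 * c * w = 0 := by rw [← hζ1, h]; ring
    rcases mul_eq_zero.mp h2 with h3 | h3
    · rcases mul_eq_zero.mp h3 with h4 | h4
      · norm_num at h4
      · exact hc0 h4
    · exact hw0 h3
  have hne : -ζ ≠ 1 := by
    intro h
    exact hζm1 (by linear_combination -h)
  -- key scalar identity
  have hS : ζ * (∑ m ∈ Finset.range (n - 1), (-ζ) ^ m)
      = Complex.I * (Real.tan θ : ℂ) := by
    rw [geom_sum_eq hne]
    have hpow : (-ζ) ^ (n - 1) = ζ ^ (n - 1) := by
      apply Even.neg_pow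
      rcases hn with ⟨t, ht⟩
      exact ⟨t, by omega⟩
    have hz : ζ * ζ ^ (n - 1) = 1 := by
      rw [← pow_succ']
      have : n - 1 + 1 = n := by omega
      rw [this, hζn]
    have htan : (Real.tan θ : ℂ) = s / c := by
      rw [hcdef, hsdef, Real.tan_eq_sin_div_cos, Complex.ofReal_div]
    rw [hpow, htan]
    have hden : -ζ - 1 ≠ 0 := by
      intro h
      exact hζm1 (by linear_combination -h)
    field_simp
    linear_combination c * hz - (c + s*Complex.I) * hcs + (c + s*Complex.I) * s^2 * Complex.I_sq - (c - s*Complex.I) * hζw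
  -- now the matrix computation
  funext i
  rw [Matrix.mulVec, dotProduct, Pi.smul_apply, smul_eq_mul]
  rw [← Equiv.sum_comp (Equiv.addLeft i) (fun k => M i k * v k)]
  have hterm : ∀ m : Fin n, M i (Equiv.addLeft i m) * v (Equiv.addLeft i m)
      = ζ ^ (i : ℕ) * (if (m : ℕ) = 0 then 0
          else (Real.cos (π / n) : ℂ) * (-1) ^ ((m : ℕ) - 1) * ζ ^ (m : ℕ)) := by
    intro m
    by_cases hm : m = 0
    · subst hm
      simp [Equiv.addLeft, hM i i]
    · have hmv : (m : ℕ) ≠ 0 := by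
        exact fun h => hm (Fin.ext (by rw [h]; simp))
      have him : i + m ≠ i := by
        intro h
        exact hm (by simpa using add_eq_left.mp h)
      have hval : ((i + m : Fin n).val + n - i.val) % n = (m : ℕ) := by
        have h1 : (i + m : Fin n).val = ((i : ℕ) + (m : ℕ)) % n := Fin.add_def i m ▸ rfl
        rcases Nat.lt_or_ge ((i : ℕ) + (m : ℕ)) n with h | h
        · rw [h1, Nat.mod_eq_of_lt h]
          have he : (i : ℕ) + (m : ℕ) + n - (i : ℕ) = (m : ℕ) + n := by omega
          rw [he, Nat.add_mod_right, Nat.mod_eq_of_lt m.isLt]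
        · have h2 : ((i : ℕ) + (m : ℕ)) % n = (i : ℕ) + (m : ℕ) - n := by
            rw [Nat.mod_eq_sub_mod h, Nat.mod_eq_of_lt (by omega)]
          rw [h1, h2]
          have he : (i : ℕ) + (m : ℕ) - n + n - (i : ℕ) = (m : ℕ) := by
            have := i.isLt; have := m.isLt; omega
          rw [he, Nat.mod_eq_of_lt m.isLt]
      have hvim : v (i + m) = ζ ^ (i : ℕ) * ζ ^ (m : ℕ) := by
        rw [hvζ, ← pow_add]
        have h1 : ((i + m : Fin n) : ℕ) = ((i : ℕ) + (m : ℕ)) % n := Fin.add_def i m ▸ rfl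
        rw [h1, ← pow_eq_pow_mod _ hζn]
      have : Equiv.addLeft i m = i + m := rfl
      rw [this, hM i (i + m), if_neg (fun h => him h.symm), hval, hvim, if_neg hmv]
      ring
  rw [Finset.sum_congr rfl (fun m _ => hterm m), ← Finset.mul_sum]
  have hsum : (∑ m : Fin n, (if (m : ℕ) = 0 then 0
        else (Real.cos (π / n) : ℂ) * (-1) ^ ((m : ℕ) - 1) * ζ ^ (m : ℕ)))
      = (Real.cos (π / n) : ℂ) * (ζ * ∑ m ∈ Finset.range (n - 1), (-ζ) ^ m) := by
    rw [Fin.sum_univ_eq_sum_range (fun m => (if m = 0 then 0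
        else (Real.cos (π / n) : ℂ) * (-1) ^ (m - 1) * ζ ^ m))]
    have hnn : n = (n - 1) + 1 := by omega
    rw [hnn, Finset.sum_range_succ']
    simp only [Nat.succ_ne_zero, if_false, if_true, Nat.add_sub_cancel, add_zero]
    rw [Finset.mul_sum, Finset.mul_sum]
    apply Finset.sum_congr rfl
    intro m _
    rw [neg_pow]
    ring
  rw [hsum, hS, hvζ]
  ring
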